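/- Let β₁ ∈ (0, 2] and T > 0. Then the function F(λ) = λπ·∫₀^{d₀²} exp(-λπ·c·u·(1 + ∫₁^{d₀²/u} T/(T + t^{β₁/2}) dt)) du + exp(-λπ d₀)/(λπ d₀), with c > 0 and d₀ > 0 fixed, tends to 0 as λ → ∞. -/

import Mathlib

set_option maxHeartbeats 1000000


open Real Filter intervalIntegral

private lemma cub_f_contOn (β₁ T : ℝ) (hT : 0 < T) {x : ℝ} (hx : 1 ≤ x) :
    ContinuousOn (fun t : ℝ => T / (T + t ^ (β₁ / 2))) (Set.Icc 1 x) := by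
  apply ContinuousOn.div continuousOn_const
  · refine continuousOn_const.add fun t ht => ?_
    exact (Real.continuousAt_rpow_const t _ (Or.inl (by linarith [ht.1] : t ≠ 0))).continuousWithinAt
  · intro t ht
    have h0 : (0:ℝ) ≤ t := by linarith [ht.1]
    have : 0 ≤ t ^ (β₁ / 2) := Real.rpow_nonneg h0 _
    positivity

private lemma cub_f_intble (β₁ T : ℝ) (hT : 0 < T) {x : ℝ} (hx : 1 ≤ x) :
    IntervalIntegrable (fun t : ℝ => T / (T + t ^ (β₁ / 2))) MeasureTheory.volume 1 x := by
  apply ContinuousOn.intervalIntegrable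
  rw [Set.uIcc_of_le hx]
  exact cub_f_contOn β₁ T hT hx

private lemma cub_f_nonneg (β₁ T : ℝ) (hT : 0 < T) {t : ℝ} (ht : 1 ≤ t) :
    0 ≤ T / (T + t ^ (β₁ / 2)) := by
  have h0 : (0:ℝ) ≤ t := by linarith
  have : 0 ≤ t ^ (β₁ / 2) := Real.rpow_nonneg h0 _
  positivity

private lemma cub_I_nonneg (β₁ T : ℝ) (hT : 0 < T) {x : ℝ} (hx : 1 ≤ x) :
    0 ≤ ∫ t in (1:ℝ)..x, T / (T + t ^ (β₁ / 2)) :=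
  intervalIntegral.integral_nonneg hx (fun t ht => cub_f_nonneg β₁ T hT ht.1)

private lemma cub_I_lower (β₁ T : ℝ) (hβ : β₁ ∈ Set.Ioc (0:ℝ) 2) (hT : 0 < T)
    {x : ℝ} (hx : 1 ≤ x) :
    T / (T + 1) * Real.log x ≤ ∫ t in (1:ℝ)..x, T / (T + t ^ (β₁ / 2)) := by
  have hcalc : T / (T + 1) * Real.log x = ∫ t in (1:ℝ)..x, T / (T + 1) * t⁻¹ := by
    rw [intervalIntegral.integral_const_mul,
      integral_inv (by rw [Set.uIcc_of_le hx]; intro h; exact absurd h.1 (by norm_num)),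
      div_one]
  rw [hcalc]
  apply intervalIntegral.integral_mono_on hx
  · exact (ContinuousOn.intervalIntegrable (by
      rw [Set.uIcc_of_le hx]
      exact continuousOn_const.mul (continuousOn_inv₀.mono (fun t ht => by
        simp only [Set.mem_compl_iff, Set.mem_singleton_iff]
        intro h; rw [h] at ht; linarith [ht.1]))))
  · exact cub_f_intble β₁ T hT hx
  · intro t ht
    have ht1 : (1:ℝ) ≤ t := ht.1
    have ht0 : (0:ℝ) < t := by linarith
    have hle : t ^ (β₁ / 2) ≤ t := by
      calc t ^ (β₁ / 2) ≤ t ^ (1:ℝ) :=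
            Real.rpow_le_rpow_of_exponent_le ht1 (by linarith [hβ.2])
        _ = t := Real.rpow_one t
    have hpos : 0 < T + t ^ (β₁ / 2) := by
      have : 0 ≤ t ^ (β₁ / 2) := Real.rpow_nonneg ht0.le _
      positivity
    have h2 : T + t ^ (β₁ / 2) ≤ (T + 1) * t := by nlinarith
    calc T / (T + 1) * t⁻¹ = T / ((T + 1) * t) := by
          field_simp
      _ ≤ T / (T + t ^ (β₁ / 2)) := div_le_div_of_nonneg_left hT.le hpos h2

theorem coverage_upper_bound_tendsto_zero
    (β₁ T c d₀ : ℝ) (hβ : β₁ ∈ Set.Ioc (0:ℝ) 2) (hT : 0 < T) (hc : 0 < c) (hd : 0 < d₀) :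
    Filter.Tendsto
      (fun lam : ℝ =>
        lam * π *
          (∫ u in (0:ℝ)..(d₀ ^ 2),
            Real.exp (-(lam * π * c * u *
              (1 + ∫ t in (1:ℝ)..(d₀ ^ 2 / u), T / (T + t ^ (β₁ / 2)))))) +
        Real.exp (-(lam * π * d₀)) / (lam * π * d₀))
      Filter.atTop (nhds 0) := by
  have hπ : (0:ℝ) < π := Real.pi_pos
  have hd2 : (0:ℝ) < d₀ ^ 2 := by positivity
  set C : ℝ := T / (T + 1) with hC
  have hCpos : 0 < C := by positivity
  rw [Metric.tendsto_nhds]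
  intro δ hδ
  -- choose ε
  set L : ℝ := max 0 ((3 / (c * δ) - 1) / C) with hL
  have hL0 : 0 ≤ L := le_max_left _ _
  set ε : ℝ := d₀ ^ 2 * Real.exp (-L) with hε
  have hεpos : 0 < ε := by positivity
  have hεle : ε ≤ d₀ ^ 2 := by
    have : Real.exp (-L) ≤ 1 := Real.exp_le_one_iff.mpr (by linarith)
    nlinarith
  set M : ℝ := 1 + C * L with hM
  have hM1 : 1 ≤ M := by nlinarith
  have hMδ : 3 / (c * δ) ≤ M := by
    rcases le_or_gt (3 / (c * δ)) 1 with h | h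
    · linarith
    · have hL2 : (3 / (c * δ) - 1) / C ≤ L := le_max_right _ _
      have : 3 / (c * δ) - 1 ≤ C * L := by
        rw [div_le_iff₀ hCpos] at hL2; linarith [hL2]
      linarith
  have hbound1 : 1 / (c * M) ≤ δ / 3 := by
    rw [div_le_div_iff₀ (by positivity) (by norm_num)]
    have := (div_le_iff₀ (by positivity : (0:ℝ) < c * δ)).mp hMδ
    nlinarith
  have hlogε : Real.log (d₀ ^ 2 / ε) = L := by
    have hxx : d₀ ^ 2 / ε = Real.exp L := by
      rw [hε, Real.exp_neg]
      field_simp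
    rw [hxx, Real.log_exp]
  -- key lower bound on I for u ∈ (0, ε]
  have hIεbound : ∀ u : ℝ, 0 < u → u ≤ ε →
      C * L ≤ ∫ t in (1:ℝ)..(d₀ ^ 2 / u), T / (T + t ^ (β₁ / 2)) := by
    intro u hu huε
    have hx : 1 ≤ d₀ ^ 2 / u := by
      rw [le_div_iff₀ hu]; nlinarith
    have h1 : C * Real.log (d₀ ^ 2 / u) ≤ _ := cub_I_lower β₁ T hβ hT hx
    refine le_trans ?_ h1
    have : Real.log (d₀ ^ 2 / ε) ≤ Real.log (d₀ ^ 2 / u) :=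
      Real.log_le_log (by positivity) (by
        apply div_le_div_of_nonneg_left hd2.le hu huε)
    rw [hlogε] at this
    nlinarith
  -- tail terms tendsto 0
  have h2 : Filter.Tendsto (fun lam : ℝ => lam * π * (d₀ ^ 2 - ε) * Real.exp (-(lam * π * c * ε)))
      atTop (nhds 0) := by
    have hbase := tendsto_pow_mul_exp_neg_atTop_nhds_zero 1
    have hscale : Filter.Tendsto (fun lam : ℝ => lam * (π * c * ε)) atTop atTop :=
      Tendsto.atTop_mul_const (by positivity) tendsto_id
    have := (hbase.comp hscale).const_mul ((d₀ ^ 2 - ε) / (c * ε))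
    rw [mul_zero] at this
    convert this using 2 with lam
    simp only [Function.comp_apply, pow_one]
    field_simp
  have h3 : Filter.Tendsto (fun lam : ℝ => Real.exp (-(lam * π * d₀)) / (lam * π * d₀))
      atTop (nhds 0) := by
    have hA : Filter.Tendsto (fun lam : ℝ => lam * π * d₀) atTop atTop :=
      Tendsto.atTop_mul_const hd (Tendsto.atTop_mul_const hπ tendsto_id)
    have h1 : Filter.Tendsto (fun x : ℝ => Real.exp (-x) / x) atTop (nhds 0) := by
      apply squeeze_zero' (g := fun x : ℝ => 1 / x)
      · filter_upwards [eventually_gt_atTop 0] with x hx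
        positivity
      · filter_upwards [eventually_gt_atTop 0] with x hx
        gcongr
        exact Real.exp_le_one_iff.mpr (by linarith)
      · simpa only [one_div] using tendsto_inv_atTop_zero
    exact h1.comp hA
  -- conclude
  filter_upwards [h2.eventually_lt_const (by linarith : (0:ℝ) < δ / 3),
    h3.eventually_lt_const (by linarith : (0:ℝ) < δ / 3),
    eventually_ge_atTop (1:ℝ)] with lam hlam2 hlam3 hlam1
  have hlam0 : (0:ℝ) < lam := by linarith
  set g : ℝ → ℝ := fun u =>
    Real.exp (-(lam * π * c * u *
      (1 + ∫ t in (1:ℝ)..(d₀ ^ 2 / u), T / (T + t ^ (β₁ / 2))))) with hg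
  have hJnonneg : 0 ≤ ∫ u in (0:ℝ)..(d₀ ^ 2), g u :=
    intervalIntegral.integral_nonneg hd2.le (fun u _ => (Real.exp_pos _).le)
  have ht3pos : 0 < Real.exp (-(lam * π * d₀)) / (lam * π * d₀) := by positivity
  rw [Real.dist_eq, sub_zero, abs_of_nonneg (by positivity)]
  by_cases hint : IntervalIntegrable g MeasureTheory.volume 0 (d₀ ^ 2)
  · -- integrable case
    have hint1 : IntervalIntegrable g MeasureTheory.volume 0 ε :=
      hint.mono_set (by
        rw [Set.uIcc_of_le hεpos.le, Set.uIcc_of_le hd2.le]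
        exact Set.Icc_subset_Icc le_rfl hεle)
    have hint2 : IntervalIntegrable g MeasureTheory.volume ε (d₀ ^ 2) :=
      hint.mono_set (by
        rw [Set.uIcc_of_le hεle, Set.uIcc_of_le hd2.le]
        exact Set.Icc_subset_Icc hεpos.le le_rfl)
    have hsplit : (∫ u in (0:ℝ)..(d₀ ^ 2), g u)
        = (∫ u in (0:ℝ)..ε, g u) + ∫ u in ε..(d₀ ^ 2), g u :=
      (intervalIntegral.integral_add_adjacent_intervals hint1 hint2).symm
    set A : ℝ := lam * π * c * M with hA'
    have hApos : 0 < A := by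
      have : (0:ℝ) < M := by linarith
      positivity
    have hexpc : Continuous fun u : ℝ => Real.exp (-(A * u)) :=
      Real.continuous_exp.comp ((continuous_const.mul continuous_id).neg)
    -- bound on [0, ε]
    have hb1 : (∫ u in (0:ℝ)..ε, g u) ≤ ∫ u in (0:ℝ)..ε, Real.exp (-(A * u)) := by
      apply intervalIntegral.integral_mono_on hεpos.le hint1
      · exact hexpc.intervalIntegrable 0 ε
      · intro u hu
        rcases eq_or_lt_of_le hu.1 with h0 | h0
        · simp [hg, ← h0]
        · apply Real.exp_le_exp.mpr
          have hI := hIεbound u h0 hu.2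
          have hlπc : (0:ℝ) ≤ lam * π * c := by positivity
          rw [neg_le_neg_iff]
          calc A * u = lam * π * c * u * M := by ring
            _ ≤ lam * π * c * u *
                (1 + ∫ t in (1:ℝ)..(d₀ ^ 2 / u), T / (T + t ^ (β₁ / 2))) := by
                apply mul_le_mul_of_nonneg_left (by linarith) (by positivity)
    have hcalc1 : (∫ u in (0:ℝ)..ε, Real.exp (-(A * u))) ≤ 1 / A := by
      have hder : ∀ u ∈ Set.uIcc (0:ℝ) ε,
          HasDerivAt (fun v : ℝ => -Real.exp (-(A * v)) / A) (Real.exp (-(A * u))) u := by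
        intro u _
        have h1 : HasDerivAt (fun v : ℝ => -(A * v)) (-A) u := by
          simpa using (hasDerivAt_id u).const_mul (-A)
        have h2 := (Real.hasDerivAt_exp (-(A * u))).comp u h1
        have h3 : HasDerivAt (fun v => -((Real.exp ∘ fun v => -(A * v)) v / A))
            (-(Real.exp (-(A * u)) * -A / A)) u := (h2.div_const A).neg
        convert h3 using 1
        · funext v
          simp [Function.comp, neg_div]
        · rw [mul_neg, neg_div, neg_neg, mul_div_assoc, div_self hApos.ne', mul_one]
      have := intervalIntegral.integral_eq_sub_of_hasDerivAt hder
        (hexpc.intervalIntegrable 0 ε)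
      rw [this]
      have he1 : 0 < Real.exp (-(A * ε)) := Real.exp_pos _
      have he2 : Real.exp (-(A * 0)) = 1 := by norm_num
      rw [he2, neg_div, neg_div]
      linarith [div_nonneg he1.le hApos.le]
    -- bound on [ε, d₀²]
    have hb2 : (∫ u in ε..(d₀ ^ 2), g u) ≤ (d₀ ^ 2 - ε) * Real.exp (-(lam * π * c * ε)) := by
      have hmono : (∫ u in ε..(d₀ ^ 2), g u)
          ≤ ∫ _ in ε..(d₀ ^ 2), Real.exp (-(lam * π * c * ε)) := by
        apply intervalIntegral.integral_mono_on hεle hint2 intervalIntegrable_const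
        intro u hu
        have hu0 : 0 < u := lt_of_lt_of_le hεpos hu.1
        have hx : 1 ≤ d₀ ^ 2 / u := (le_div_iff₀ hu0).mpr (by nlinarith [hu.2])
        have hI0 := cub_I_nonneg β₁ T hT hx
        apply Real.exp_le_exp.mpr
        rw [neg_le_neg_iff]
        have hlπc : (0:ℝ) ≤ lam * π * c := by positivity
        nlinarith [hu.1, mul_nonneg hlπc hu0.le]
      rw [intervalIntegral.integral_const, smul_eq_mul] at hmono
      exact hmono
    -- combine
    have hJle : lam * π * (∫ u in (0:ℝ)..(d₀ ^ 2), g u)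
        ≤ 1 / (c * M) + lam * π * (d₀ ^ 2 - ε) * Real.exp (-(lam * π * c * ε)) := by
      rw [hsplit]
      have hlπ : (0:ℝ) < lam * π := by positivity
      have h1 : lam * π * (∫ u in (0:ℝ)..ε, g u) ≤ lam * π * (1 / A) :=
        mul_le_mul_of_nonneg_left (le_trans hb1 hcalc1) hlπ.le
      have h2' : lam * π * (1 / A) = 1 / (c * M) := by
        rw [hA']
        field_simp
      have h3' : lam * π * (∫ u in ε..(d₀ ^ 2), g u)
          ≤ lam * π * (d₀ ^ 2 - ε) * Real.exp (-(lam * π * c * ε)) := by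
        calc lam * π * (∫ u in ε..(d₀ ^ 2), g u)
            ≤ lam * π * ((d₀ ^ 2 - ε) * Real.exp (-(lam * π * c * ε))) :=
              mul_le_mul_of_nonneg_left hb2 hlπ.le
          _ = lam * π * (d₀ ^ 2 - ε) * Real.exp (-(lam * π * c * ε)) := by ring
      calc lam * π * ((∫ u in (0:ℝ)..ε, g u) + ∫ u in ε..(d₀ ^ 2), g u)
          = lam * π * (∫ u in (0:ℝ)..ε, g u) + lam * π * (∫ u in ε..(d₀ ^ 2), g u) := by
            ring
        _ ≤ 1 / (c * M) + lam * π * (d₀ ^ 2 - ε) * Real.exp (-(lam * π * c * ε)) := by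
            rw [← h2']
            exact add_le_add h1 h3'
    calc lam * π * (∫ u in (0:ℝ)..(d₀ ^ 2), g u)
          + Real.exp (-(lam * π * d₀)) / (lam * π * d₀)
        ≤ (1 / (c * M) + lam * π * (d₀ ^ 2 - ε) * Real.exp (-(lam * π * c * ε)))
          + Real.exp (-(lam * π * d₀)) / (lam * π * d₀) := by linarith
      _ < δ / 3 + δ / 3 + δ / 3 := by
          have := hbound1
          linarith [hlam2, hlam3]
      _ = δ := by ring
  · -- non-integrable case: integral is zero
    rw [intervalIntegral.integral_undef hint, mul_zero, zero_add]
    linarith [hlam3]
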